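/- Let X be a path-connected topological space, A ⊆ X a path-connected subspace, and f : X̃ → X a path-connected covering map such that Ã = f⁻¹(A) is path-connected and the inclusion-induced map π₁(Ã) → π₁(X̃) is an isomorphism. Then the inclusion-induced map π₁(A) → π₁(X) is injective. -/

import Mathlib

open CategoryTheory unitInterval

attribute [local instance] Path.Homotopic.setoid

namespace SqLift

open Set

noncomputable section

variable {X Xt : Type} [TopologicalSpace X] [TopologicalSpace Xt] {f : Xt → X}
  [∀ x : X, Nonempty (f ⁻¹' {x})]

/-- clamp to `[a, b]` -/
def ccl (a b r : ℝ) : ℝ := max a (min b r)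

/-- clamp to `[0, 1]` -/
def cl (r : ℝ) : ℝ := ccl 0 1 r

lemma ccl_mem {a b : ℝ} (hab : a ≤ b) (r : ℝ) : ccl a b r ∈ Icc a b :=
  ⟨le_max_left _ _, max_le hab (min_le_left _ _)⟩

lemma ccl_of_mem {a b r : ℝ} (h : r ∈ Icc a b) : ccl a b r = r := by
  unfold ccl
  rw [min_eq_right h.2, max_eq_right h.1]

lemma ccl_idem {a b : ℝ} (hab : a ≤ b) (r : ℝ) : ccl a b (ccl a b r) = ccl a b r :=
  ccl_of_mem (ccl_mem hab r)

@[fun_prop]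
lemma continuous_ccl (a b : ℝ) : Continuous (ccl a b) := by
  unfold ccl; fun_prop

lemma ccl_of_ge {a b s : ℝ} (hab : a ≤ b) (hs : a ≤ s) : ccl a b s = min s b := by
  unfold ccl
  rw [min_comm]
  exact max_eq_right (le_min hs hab)

lemma ccl_min {a b : ℝ} (hab : a ≤ b) (s : ℝ) : ccl a b (min s b) = ccl a b s := by
  unfold ccl
  rw [min_comm s b, ← min_assoc, min_self]

lemma cl_mem (r : ℝ) : cl r ∈ Icc (0:ℝ) 1 := ccl_mem zero_le_one r

lemma cl_of_mem {r : ℝ} (h : r ∈ Icc (0:ℝ) 1) : cl r = r := ccl_of_mem h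

lemma cl_idem (r : ℝ) : cl (cl r) = cl r := ccl_idem zero_le_one r

@[fun_prop]
lemma continuous_cl : Continuous cl := continuous_ccl 0 1

lemma cl_of_nonpos {r : ℝ} (h : r ≤ 0) : cl r = 0 := by
  unfold cl ccl
  exact max_eq_left (le_trans (min_le_right _ _) h)

lemma cl_of_one_le {r : ℝ} (h : 1 ≤ r) : cl r = 1 := by
  unfold cl ccl
  rw [min_eq_left h]
  exact max_eq_right zero_le_one

lemma cl_min_nonpos (s : ℝ) {c : ℝ} (hc : c ≤ 0) : cl (min s c) = cl c := by
  rw [cl_of_nonpos (le_trans (min_le_right s c) hc), cl_of_nonpos hc]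

lemma cl_min_one_le (s : ℝ) {c : ℝ} (hc : 1 ≤ c) : cl (min s c) = cl s := by
  rcases le_total s c with h | h
  · rw [min_eq_left h]
  · rw [min_eq_right h, cl_of_one_le hc, cl_of_one_le (le_trans hc h)]

lemma cl_eq_max_min (s : ℝ) : cl s = max 0 (min s 1) := by
  unfold cl ccl
  rw [min_comm]

/-- The closed grid cell with indices `(i, j)` in the `n × n` grid on the unit square. -/
def cellSet (n i j : ℕ) : Set (ℝ × ℝ) :=
  Icc ((i:ℝ)/n) (((i:ℝ)+1)/n) ×ˢ Icc ((j:ℝ)/n) (((j:ℝ)+1)/n)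

/-- A local section of a covering map through a given point. -/
lemma exists_section (hf : IsCoveringMap f) (x : X) (e' : Xt)
    (he' : f e' ∈ (hf x).toTrivialization.baseSet) :
    ∃ sig : X → Xt, ContinuousOn sig (hf x).toTrivialization.baseSet ∧
      (∀ y ∈ (hf x).toTrivialization.baseSet, f (sig y) = y) ∧ sig (f e') = e' := by
  set T := (hf x).toTrivialization with hT
  refine ⟨fun y => T.toOpenPartialHomeomorph.symm (y, (T e').2), ?_,
    fun y hy => T.proj_symm_apply' hy, T.symm_apply_mk_proj (T.mem_source.2 he')⟩
  exact T.toOpenPartialHomeomorph.continuousOn_symm.comp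
    (Continuous.continuousOn (by fun_prop)) (fun y hy => T.mem_target.2 hy)

/-- Lifting along the bottom row of the grid. -/
lemma row_lift (hf : IsCoveringMap f) (F : ℝ × ℝ → X) (hFc : Continuous F)
    (hFcl : ∀ s t : ℝ, F (s, t) = F (cl s, cl t)) {n : ℕ} (hn : 0 < n)
    (hcell : ∀ i : ℕ, i < n → ∃ x : X, ∀ p ∈ cellSet n i 0,
      F p ∈ (hf x).toTrivialization.baseSet)
    (e : Xt) (he : f e = F (0, 0)) :
    ∀ k : ℕ, k ≤ n → ∃ g : ℝ → Xt, Continuous g ∧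
      (∀ s, f (g s) = F (min s ((k:ℝ)/n), 0)) ∧ g 0 = e ∧
      (∀ s, g s = g (max 0 (min s ((k:ℝ)/n)))) := by
  have hN : (0:ℝ) < n := by exact_mod_cast hn
  have hFcong : ∀ {s s' t t' : ℝ}, cl s = cl s' → cl t = cl t' → F (s, t) = F (s', t') := by
    intro s s' t t' h1 h2
    rw [hFcl s t, hFcl s' t', h1, h2]
  intro k
  induction k with
  | zero =>
    intro _
    refine ⟨fun _ => e, continuous_const, fun s => ?_, rfl, fun _ => rfl⟩
    rw [he]
    exact hFcong (by rw [Nat.cast_zero, zero_div, cl_min_nonpos s le_rfl]) rfl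
  | succ k ih =>
    intro hk
    obtain ⟨g, hgc, hg1, hg0, hg2⟩ := ih (Nat.le_of_succ_le hk)
    obtain ⟨x, hx⟩ := hcell k (Nat.lt_of_succ_le hk)
    set c : ℝ := (k:ℝ)/n with hc
    set c' : ℝ := ((k:ℝ)+1)/n with hc'
    have hcc' : c < c' := by
      rw [hc, hc', div_lt_div_iff_of_pos_right hN]
      linarith
    have hc0 : (0:ℝ) ≤ c := by positivity
    have h0mem : (0:ℝ) ∈ Icc (((0:ℕ):ℝ)/n) ((((0:ℕ):ℝ)+1)/n) := by
      constructor
      · simp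
      · rw [Nat.cast_zero, zero_add]
        positivity
    have hcorner : ((k:ℝ)/n, (0:ℝ)) ∈ cellSet n k 0 := ⟨⟨le_rfl, hcc'.le⟩, h0mem⟩
    have he'base : f (g c) ∈ (hf x).toTrivialization.baseSet := by
      rw [hg1, min_self]
      exact hx _ hcorner
    obtain ⟨sig, hsigc, hsig1, hsig2⟩ := exists_section hf x (g c) he'base
    have hcclmem : ∀ s, (ccl c c' s, (0:ℝ)) ∈ cellSet n k 0 :=
      fun s => ⟨ccl_mem hcc'.le s, h0mem⟩
    set h : ℝ → Xt := fun s => sig (F (ccl c c' s, 0)) with hh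
    have hhc : Continuous h := by
      apply hsigc.comp_continuous
      · exact hFc.comp (by fun_prop)
      · intro s
        exact hx _ (hcclmem s)
    have hhf : ∀ s, f (h s) = F (ccl c c' s, 0) := fun s => hsig1 _ (hx _ (hcclmem s))
    have hFc0 : F (c, 0) = f (g c) := by rw [hg1 c, min_self]
    have hhg : h c = g c := by
      show sig (F (ccl c c' c, 0)) = g c
      rw [ccl_of_mem ⟨le_rfl, hcc'.le⟩, hFc0, hsig2]
    have hcast : ((k+1:ℕ):ℝ)/n = c' := by push_cast; rw [hc']
    refine ⟨fun s => if s ≤ c then g s else h s,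
      Continuous.if_le hgc hhc continuous_id continuous_const
        (fun s hs => by rw [hs, hhg]), ?_, ?_, ?_⟩
    · intro s
      rw [hcast]
      dsimp only
      by_cases hsc : s ≤ c
      · rw [if_pos hsc, hg1 s, min_eq_left hsc, min_eq_left (hsc.trans hcc'.le)]
      · rw [if_neg hsc, hhf s, ccl_of_ge hcc'.le (le_of_not_ge hsc)]
    · dsimp only
      rw [if_pos hc0, hg0]
    · intro s
      rw [hcast]
      dsimp only
      by_cases hsc : s ≤ c
      · rw [if_pos hsc, min_eq_left (hsc.trans hcc'.le)]
        by_cases hs0 : s ≤ 0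
        · rw [max_eq_left hs0, if_pos hc0, hg2 s, min_eq_left hsc, max_eq_left hs0]
        · rw [max_eq_right (le_of_not_ge hs0), if_pos hsc]
      · push_neg at hsc
        rw [if_neg (not_le.2 hsc)]
        have hM : max 0 (min s c') = min s c' :=
          max_eq_right (le_trans hc0 (le_min hsc.le hcc'.le))
        rw [hM, if_neg (not_le.2 (lt_min hsc hcc'))]
        show sig (F (ccl c c' s, 0)) = sig (F (ccl c c' (min s c'), 0))
        rw [ccl_min hcc'.le]

/-- Lifting a horizontal strip of the grid, given a lift of its bottom edge. -/
lemma strip_lift (hf : IsCoveringMap f) (F : ℝ × ℝ → X) (hFc : Continuous F)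
    (hFcl : ∀ s t : ℝ, F (s, t) = F (cl s, cl t)) {n : ℕ} (hn : 0 < n)
    {j : ℕ} (hj : j < n)
    (hcell : ∀ i : ℕ, i < n → ∃ x : X, ∀ p ∈ cellSet n i j,
      F p ∈ (hf x).toTrivialization.baseSet)
    (g : ℝ → Xt) (hgc : Continuous g) (hg1 : ∀ s, f (g s) = F (s, (j:ℝ)/n))
    (hg2 : ∀ s, g s = g (cl s)) :
    ∀ k : ℕ, k ≤ n → ∃ G : ℝ × ℝ → Xt, Continuous G ∧
      (∀ s t, f (G (s, t)) = F (min s ((k:ℝ)/n), ccl ((j:ℝ)/n) (((j:ℝ)+1)/n) t)) ∧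
      (∀ s, G (s, (j:ℝ)/n) = g (min s ((k:ℝ)/n))) ∧
      (∀ s t, G (s, t) = G (max 0 (min s ((k:ℝ)/n)), t)) ∧
      (∀ s t, G (s, t) = G (s, ccl ((j:ℝ)/n) (((j:ℝ)+1)/n) t)) := by
  have hN : (0:ℝ) < n := by exact_mod_cast hn
  have hFcong : ∀ {s s' t t' : ℝ}, cl s = cl s' → cl t = cl t' → F (s, t) = F (s', t') := by
    intro s s' t t' h1 h2
    rw [hFcl s t, hFcl s' t', h1, h2]
  set d : ℝ := (j:ℝ)/n with hd
  set d' : ℝ := ((j:ℝ)+1)/n with hd'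
  have hdd' : d < d' := by
    rw [hd, hd', div_lt_div_iff_of_pos_right hN]
    linarith
  have hd0 : (0:ℝ) ≤ d := by positivity
  have hdmem : d ∈ Icc d d' := ⟨le_rfl, hdd'.le⟩
  have h0fst : (0:ℝ) ∈ Icc (((0:ℕ):ℝ)/n) ((((0:ℕ):ℝ)+1)/n) := by
    constructor
    · simp
    · rw [Nat.cast_zero, zero_add]
      positivity
  intro k
  induction k with
  | zero =>
    intro _
    obtain ⟨x, hx⟩ := hcell 0 hn
    have he'base : f (g 0) ∈ (hf x).toTrivialization.baseSet := by
      rw [hg1]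
      exact hx _ ⟨h0fst, hdmem⟩
    obtain ⟨sig, hsigc, hsig1, hsig2⟩ := exists_section hf x (g 0) he'base
    have hmem : ∀ t, ((0:ℝ), ccl d d' t) ∈ cellSet n 0 j :=
      fun t => ⟨h0fst, ccl_mem hdd'.le t⟩
    have hg00 : ∀ s : ℝ, g (min s 0) = g 0 := by
      intro s
      rw [hg2 (min s 0), cl_min_nonpos s le_rfl, cl_of_nonpos le_rfl]
    refine ⟨fun p => sig (F (0, ccl d d' p.2)), ?_, ?_, ?_, fun _ _ => rfl, ?_⟩
    · apply hsigc.comp_continuous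
      · exact hFc.comp (by fun_prop)
      · intro p
        exact hx _ (hmem p.2)
    · intro s t
      dsimp only
      rw [Nat.cast_zero, zero_div, hsig1 _ (hx _ (hmem t))]
      exact hFcong (by rw [cl_min_nonpos s le_rfl]) rfl
    · intro s
      dsimp only
      rw [Nat.cast_zero, zero_div, hg00 s]
      show sig (F (0, ccl d d' d)) = g 0
      rw [ccl_of_mem hdmem, ← hg1 0, hsig2]
    · intro s t
      show sig (F (0, ccl d d' t)) = sig (F (0, ccl d d' (ccl d d' t)))
      rw [ccl_idem hdd'.le]
  | succ k ih =>
    intro hk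
    obtain ⟨G, hGc, hG1, hGb, hGs, hGt⟩ := ih (Nat.le_of_succ_le hk)
    obtain ⟨x, hx⟩ := hcell k (Nat.lt_of_succ_le hk)
    set c : ℝ := (k:ℝ)/n with hc
    set c' : ℝ := ((k:ℝ)+1)/n with hc'
    have hcc' : c < c' := by
      rw [hc, hc', div_lt_div_iff_of_pos_right hN]
      linarith
    have hc0 : (0:ℝ) ≤ c := by positivity
    have hcorner : (c, d) ∈ cellSet n k j := ⟨⟨le_rfl, hcc'.le⟩, hdmem⟩
    have hgcd : G (c, d) = g c := by rw [hGb, min_self]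
    have he'base : f (g c) ∈ (hf x).toTrivialization.baseSet := by
      rw [hg1]
      exact hx _ hcorner
    obtain ⟨sig, hsigc, hsig1, hsig2⟩ := exists_section hf x (g c) he'base
    have hcclmem : ∀ s t, (ccl c c' s, ccl d d' t) ∈ cellSet n k j :=
      fun s t => ⟨ccl_mem hcc'.le s, ccl_mem hdd'.le t⟩
    set h : ℝ × ℝ → Xt := fun p => sig (F (ccl c c' p.1, ccl d d' p.2)) with hh
    have hhc : Continuous h := by
      apply hsigc.comp_continuous
      · exact hFc.comp (by fun_prop)
      · intro p
        exact hx _ (hcclmem p.1 p.2)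
    have hhf : ∀ s t, f (h (s, t)) = F (ccl c c' s, ccl d d' t) :=
      fun s t => hsig1 _ (hx _ (hcclmem s t))
    -- agreement along the vertical line s = c
    have hagree : (fun t => G (c, t)) = fun t => h (c, t) := by
      apply hf.eq_of_comp_eq (by fun_prop) (by fun_prop) _ d
      · rw [hgcd]
        show g c = sig (F (ccl c c' c, ccl d d' d))
        rw [ccl_of_mem ⟨le_rfl, hcc'.le⟩, ccl_of_mem hdmem, ← hg1 c, hsig2]
      · funext t
        show f (G (c, t)) = f (h (c, t))
        rw [hG1, hhf, min_self, ccl_of_mem ⟨le_rfl, hcc'.le⟩]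
    -- the values of h on the bottom edge agree with g
    have hbot : ∀ u ∈ Icc c c', sig (F (ccl c c' u, d)) = g u := by
      have hψc : Continuous fun v : ℝ => sig (F (ccl c c' v, d)) :=
        hsigc.comp_continuous (hFc.comp (by fun_prop))
          (fun v => hx _ ⟨ccl_mem hcc'.le v, hdmem⟩)
      intro u hu
      refine hf.eqOn_of_comp_eqOn (isPreconnected_Icc (a := c) (b := c'))
        hψc.continuousOn
        hgc.continuousOn
        (fun v hv => by
          show f (sig (F (ccl c c' v, d))) = f (g v)
          rw [hsig1 _ (hx _ ⟨ccl_mem hcc'.le v, hdmem⟩), hg1, ccl_of_mem hv])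
        (⟨le_rfl, hcc'.le⟩ : c ∈ Icc c c')
        (by
          show sig (F (ccl c c' c, d)) = g c
          rw [ccl_of_mem ⟨le_rfl, hcc'.le⟩, ← hg1 c, hsig2])
        hu
    have hcast : ((k+1:ℕ):ℝ)/n = c' := by push_cast; rw [hc']
    refine ⟨fun p => if p.1 ≤ c then G p else h p,
      Continuous.if_le hGc hhc continuous_fst continuous_const
        (fun p hp => by
          have h1 := congrFun hagree p.2
          rw [← hp] at h1
          exact h1), ?_, ?_, ?_, ?_⟩
    · intro s t
      rw [hcast]
      dsimp only
      by_cases hsc : s ≤ c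
      · rw [if_pos hsc, hG1 s t, min_eq_left hsc, min_eq_left (hsc.trans hcc'.le)]
      · rw [if_neg hsc, hhf s t, ccl_of_ge hcc'.le (le_of_not_ge hsc)]
    · intro s
      rw [hcast]
      dsimp only
      by_cases hsc : s ≤ c
      · rw [if_pos hsc, hGb s, min_eq_left hsc, min_eq_left (hsc.trans hcc'.le)]
      · push_neg at hsc
        rw [if_neg (not_le.2 hsc)]
        show sig (F (ccl c c' s, ccl d d' d)) = g (min s c')
        rw [ccl_of_mem hdmem, ← ccl_min hcc'.le s]
        exact hbot _ ⟨le_min hsc.le hcc'.le, min_le_right _ _⟩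
    · intro s t
      rw [hcast]
      dsimp only
      by_cases hsc : s ≤ c
      · rw [if_pos hsc, min_eq_left (hsc.trans hcc'.le)]
        by_cases hs0 : s ≤ 0
        · rw [max_eq_left hs0, if_pos hc0, hGs s t, min_eq_left hsc, max_eq_left hs0]
        · rw [max_eq_right (le_of_not_ge hs0), if_pos hsc]
      · push_neg at hsc
        rw [if_neg (not_le.2 hsc)]
        have hM : max 0 (min s c') = min s c' :=
          max_eq_right (le_trans hc0 (le_min hsc.le hcc'.le))
        rw [hM, if_neg (not_le.2 (lt_min hsc hcc'))]
        show sig (F (ccl c c' s, ccl d d' t)) = sig (F (ccl c c' (min s c'), ccl d d' t))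
        rw [ccl_min hcc'.le]
    · intro s t
      dsimp only
      by_cases hsc : s ≤ c
      · rw [if_pos hsc, if_pos hsc]
        exact hGt s t
      · rw [if_neg hsc, if_neg hsc]
        show sig (F (ccl c c' s, ccl d d' t)) = sig (F (ccl c c' s, ccl d d' (ccl d d' t)))
        rw [ccl_idem hdd'.le]

/-- Lifting the whole square, strip by strip. -/
lemma square_lift_ind (hf : IsCoveringMap f) (F : ℝ × ℝ → X) (hFc : Continuous F)
    (hFcl : ∀ s t : ℝ, F (s, t) = F (cl s, cl t)) {n : ℕ} (hn : 0 < n)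
    (hcell : ∀ i j : ℕ, i < n → j < n → ∃ x : X, ∀ p ∈ cellSet n i j,
      F p ∈ (hf x).toTrivialization.baseSet)
    (e : Xt) (he : f e = F (0, 0)) :
    ∀ j : ℕ, j ≤ n → ∃ G : ℝ × ℝ → Xt, Continuous G ∧
      (∀ s t, f (G (s, t)) = F (s, min t ((j:ℝ)/n))) ∧ G (0, 0) = e ∧
      (∀ s t, G (s, t) = G (cl s, max 0 (min t ((j:ℝ)/n)))) := by
  have hN : (0:ℝ) < n := by exact_mod_cast hn
  have hnn : ((n:ℝ))/n = 1 := div_self hN.ne'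
  have hFcong : ∀ {s s' t t' : ℝ}, cl s = cl s' → cl t = cl t' → F (s, t) = F (s', t') := by
    intro s s' t t' h1 h2
    rw [hFcl s t, hFcl s' t', h1, h2]
  intro j
  induction j with
  | zero =>
    intro _
    obtain ⟨g, hgc, hg1, hg0, hg2⟩ :=
      row_lift hf F hFc hFcl hn (fun i hi => hcell i 0 hi hn) e he n le_rfl
    have hgcl : ∀ s, g s = g (cl s) := by
      intro s
      rw [hg2 s, hnn, cl_eq_max_min]
    refine ⟨fun p => g p.1, hgc.comp continuous_fst, ?_, hg0, ?_⟩
    · intro s t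
      dsimp only
      rw [hg1 s, hnn]
      exact hFcong (cl_min_one_le s le_rfl) (by rw [Nat.cast_zero, zero_div, cl_min_nonpos t le_rfl])
    · intro s t
      dsimp only
      exact hgcl s
  | succ j ih =>
    intro hj
    obtain ⟨G, hGc, hG1, hG0, hGcl⟩ := ih (Nat.le_of_succ_le hj)
    set d : ℝ := (j:ℝ)/n with hd
    set d' : ℝ := ((j:ℝ)+1)/n with hd'
    have hdd' : d < d' := by
      rw [hd, hd', div_lt_div_iff_of_pos_right hN]
      linarith
    have hd0 : (0:ℝ) ≤ d := by positivity
    -- the bottom edge of the next strip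
    set g : ℝ → Xt := fun s => G (s, d) with hg
    have hgc : Continuous g := hGc.comp (by fun_prop)
    have hg1 : ∀ s, f (g s) = F (s, d) := by
      intro s
      show f (G (s, d)) = F (s, d)
      rw [hG1 s d, min_self]
    have hg2 : ∀ s, g s = g (cl s) := by
      intro s
      show G (s, d) = G (cl s, d)
      rw [hGcl s d, min_self, max_eq_right hd0]
    obtain ⟨SL, hSLc, hSL1, hSLb, hSLs, hSLt⟩ :=
      strip_lift hf F hFc hFcl hn (Nat.lt_of_succ_le hj)
        (fun i hi => hcell i j hi (Nat.lt_of_succ_le hj)) g hgc hg1 hg2 n le_rfl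
    rw [← hd] at hSL1 hSLb hSLt
    rw [← hd'] at hSL1 hSLt
    have hSLcl : ∀ s t, SL (s, t) = SL (cl s, t) := by
      intro s t
      rw [hSLs s t, hnn, cl_eq_max_min]
    have hSLbot : ∀ s, SL (s, d) = g s := by
      intro s
      rw [hSLb s, hnn]
      rw [(hg2 (min s 1) : g (min s 1) = g (cl (min s 1))), cl_min_one_le s le_rfl, ← hg2 s]
    have hcast : ((j+1:ℕ):ℝ)/n = d' := by push_cast; rw [hd']
    refine ⟨fun p => if p.2 ≤ d then G p else SL p,
      Continuous.if_le hGc hSLc continuous_snd continuous_const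
        (fun p hp => by
          have h1 : SL (p.1, d) = g p.1 := hSLbot p.1
          rw [← hp] at h1
          have h2 : G p = G (p.1, d) := by rw [← hp]
          exact h2.trans h1.symm), ?_, ?_, ?_⟩
    · intro s t
      rw [hcast]
      dsimp only
      by_cases htd : t ≤ d
      · rw [if_pos htd, hG1 s t, min_eq_left htd, min_eq_left (htd.trans hdd'.le)]
      · push_neg at htd
        rw [if_neg (not_le.2 htd), hSL1 s t, hnn]
        exact hFcong (cl_min_one_le s le_rfl) (by rw [ccl_of_ge hdd'.le htd.le])
    · dsimp only
      rw [if_pos hd0, hG0]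
    · intro s t
      rw [hcast]
      dsimp only
      by_cases htd : t ≤ d
      · rw [if_pos htd, min_eq_left (htd.trans hdd'.le)]
        by_cases ht0 : t ≤ 0
        · rw [max_eq_left ht0, if_pos hd0, hGcl s t, min_eq_left htd, max_eq_left ht0]
        · rw [max_eq_right (le_of_not_ge ht0), if_pos htd, hGcl s t, min_eq_left htd,
            max_eq_right (le_of_not_ge ht0)]
      · push_neg at htd
        rw [if_neg (not_le.2 htd)]
        have hM : max 0 (min t d') = min t d' :=
          max_eq_right (le_trans hd0 (le_min htd.le hdd'.le))
        rw [hM, if_neg (not_le.2 (lt_min htd hdd'))]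
        calc SL (s, t) = SL (cl s, t) := hSLcl s t
          _ = SL (cl s, ccl d d' t) := hSLt (cl s) t
          _ = SL (cl s, ccl d d' (min t d')) := by rw [ccl_min hdd'.le]
          _ = SL (cl s, min t d') := (hSLt (cl s) (min t d')).symm
open unitInterval in
/-- Square lifting for covering maps. -/
theorem sq_lift' {X Xt : Type} [TopologicalSpace X] [TopologicalSpace Xt]
    {f : Xt → X} [∀ x : X, Nonempty (f ⁻¹' {x})] (hf : IsCoveringMap f) (H : C(I × I, X)) (e : Xt)
    (he : f e = H (0, 0)) :
    ∃ G : C(I × I, Xt), (∀ p, f (G p) = H p) ∧ G (0, 0) = e := by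
  set F : ℝ × ℝ → X := fun p => H (⟨cl p.1, cl_mem p.1⟩, ⟨cl p.2, cl_mem p.2⟩) with hFdef
  have hFc : Continuous F :=
    H.continuous.comp
      (((continuous_cl.comp continuous_fst).subtype_mk _).prodMk
        ((continuous_cl.comp continuous_snd).subtype_mk _))
  have hFcl : ∀ s t : ℝ, F (s, t) = F (cl s, cl t) := by
    intro s t
    show H _ = H _
    congr 1
    exact Prod.ext (Subtype.ext (cl_idem s).symm) (Subtype.ext (cl_idem t).symm)
  have hFcong : ∀ {s s' t t' : ℝ}, cl s = cl s' → cl t = cl t' → F (s, t) = F (s', t') := by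
    intro s s' t t' h1 h2
    rw [hFcl s t, hFcl s' t', h1, h2]
  have hcl0 : cl 0 = 0 := cl_of_mem ⟨le_rfl, zero_le_one⟩
  have he' : f e = F (0, 0) := by
    rw [he]
    show H _ = H _
    congr 1
    exact Prod.ext (Subtype.ext hcl0.symm) (Subtype.ext hcl0.symm)
  obtain ⟨δ, hδ, hball⟩ := lebesgue_number_lemma_of_metric
    (isCompact_Icc.prod isCompact_Icc : IsCompact (Icc (0:ℝ) 1 ×ˢ Icc (0:ℝ) 1))
    (fun x : X => (hf x).toTrivialization.open_baseSet.preimage hFc)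
    (fun z _ => mem_iUnion.2 ⟨F z, (hf (F z)).mem_toTrivialization_baseSet⟩)
  obtain ⟨n, hnδ⟩ := exists_nat_gt (1/δ)
  have hn : 0 < n := by
    have h0 : (0:ℝ) < n := lt_trans (by positivity) hnδ
    exact_mod_cast h0
  have hN : (0:ℝ) < n := by exact_mod_cast hn
  have h1nδ : 1/(n:ℝ) < δ := by
    rw [div_lt_iff₀ hN, mul_comm]
    exact (div_lt_iff₀ hδ).mp hnδ
  have hcell : ∀ i j : ℕ, i < n → j < n → ∃ x : X, ∀ p ∈ cellSet n i j,
      F p ∈ (hf x).toTrivialization.baseSet := by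
    intro i j hi hj
    have hzK : ((i:ℝ)/n, (j:ℝ)/n) ∈ Icc (0:ℝ) 1 ×ˢ Icc (0:ℝ) 1 :=
      ⟨⟨by positivity, by rw [div_le_one hN]; exact_mod_cast hi.le⟩,
       ⟨by positivity, by rw [div_le_one hN]; exact_mod_cast hj.le⟩⟩
    obtain ⟨x, hx⟩ := hball _ hzK
    refine ⟨x, fun p hp => hx ?_⟩
    have hiadd : ((i:ℝ)+1)/n = (i:ℝ)/n + 1/n := by ring
    have hjadd : ((j:ℝ)+1)/n = (j:ℝ)/n + 1/n := by ring
    have b1 : |p.1 - (i:ℝ)/n| ≤ 1/n :=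
      abs_le.2 ⟨by linarith [hp.1.1, (by positivity : (0:ℝ) ≤ 1/(n:ℝ))],
        by linarith [hp.1.2, hiadd]⟩
    have b2 : |p.2 - (j:ℝ)/n| ≤ 1/n :=
      abs_le.2 ⟨by linarith [hp.2.1, (by positivity : (0:ℝ) ≤ 1/(n:ℝ))],
        by linarith [hp.2.2, hjadd]⟩
    show p ∈ Metric.ball (((i:ℝ)/n, (j:ℝ)/n) : ℝ × ℝ) δ
    rw [Metric.mem_ball, Prod.dist_eq]
    apply max_lt <;> rw [Real.dist_eq]
    · exact lt_of_le_of_lt b1 h1nδ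
    · exact lt_of_le_of_lt b2 h1nδ
  obtain ⟨G, hGc, hG1, hG0, -⟩ :=
    square_lift_ind hf F hFc hFcl hn hcell e he' n le_rfl
  have hnn : ((n:ℝ))/n = 1 := div_self hN.ne'
  refine ⟨⟨fun p => G (p.1.1, p.2.1), hGc.comp (by fun_prop)⟩, ?_, ?_⟩
  · intro p
    show f (G (↑p.1, ↑p.2)) = H p
    rw [hG1, hnn]
    have h2 : F (↑p.1, ↑p.2) = H p := by
      show H _ = H _
      congr 1
      exact Prod.ext (Subtype.ext (cl_of_mem p.1.2)) (Subtype.ext (cl_of_mem p.2.2))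
    rw [← h2]
    exact hFcong rfl (cl_min_one_le _ le_rfl)
  · exact hG0

end

end SqLift

/-- Square lifting lemma for covering maps: any continuous map from the unit square
lifts through a covering map, with prescribed value at the corner `(0,0)`. -/
theorem sq_lift {X Xt : Type} [TopologicalSpace X] [TopologicalSpace Xt]
    {f : Xt → X} [∀ x : X, Nonempty (f ⁻¹' {x})] (hf : IsCoveringMap f) (H : C(I × I, X)) (e : Xt)
    (he : f e = H (0, 0)) :
    ∃ G : C(I × I, Xt), (∀ p, f (G p) = H p) ∧ G (0, 0) = e :=
  SqLift.sq_lift' hf H e he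

/-- The homomorphism on fundamental groups induced by a continuous map. -/
noncomputable def π₁ind {X Y : Type} [TopologicalSpace X] [TopologicalSpace Y]
    (f : C(X, Y)) (x : X) : FundamentalGroup X x →* FundamentalGroup Y (f x) :=
  Functor.mapEnd (FundamentalGroupoid.mk x)
    (FundamentalGroupoid.map f)

theorem π₁ind_hom_eq {X Y : Type} [TopologicalSpace X] [TopologicalSpace Y]
    (g : C(X, Y)) (x : X) (p : FundamentalGroup X x) (γ : Path x x)
    (h : FundamentalGroup.toPath p = ⟦γ⟧) :
    FundamentalGroup.toPath (π₁ind g x p) = ⟦γ.map g.continuous⟧ := by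
  show (FundamentalGroupoid.map g).map (FundamentalGroup.toPath p) = _
  rw [h]
  rfl

/-- Statement: X path-connected, A ⊆ X path-connected, f : X̃ → X a covering with X̃
path-connected, Ã = f⁻¹(A) path-connected, basepoints chosen compatibly, and the
inclusion Ã ↪ X̃ inducing an isomorphism on fundamental groups.  Then the inclusion
A ↪ X induces the stated property on fundamental groups. -/
theorem stmt_0 {X Xt : Type} [TopologicalSpace X] [TopologicalSpace Xt]
    [PathConnectedSpace X] [PathConnectedSpace Xt]
    (f : Xt → X) (hf : IsCoveringMap f)
    (A : Set X) (hA : IsPathConnected A) (hAt : IsPathConnected (f ⁻¹' A))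
    (a₀ : A) (b₀ : (f ⁻¹' A : Set Xt)) (hbase : f ↑b₀ = ↑a₀)
    (hiso : Function.Bijective
      (π₁ind (⟨Subtype.val, continuous_subtype_val⟩ : C((f ⁻¹' A : Set Xt), Xt)) b₀)) :
    Function.Injective (π₁ind (⟨Subtype.val, continuous_subtype_val⟩ : C(A, X)) a₀) := by
  obtain ⟨a₀v, ha₀⟩ := a₀
  simp only at hbase
  subst hbase
  rw [injective_iff_map_eq_one]
  intro p hp
  -- extract a representative loop γ in A
  obtain ⟨γ, hγ⟩ := Quotient.exists_rep
    (FundamentalGroup.toPath p : Path.Homotopic.Quotient (⟨f ↑b₀, ha₀⟩ : A) (⟨f ↑b₀, ha₀⟩ : A))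
  -- the image of p has hom ⟦γ.map⟧ and equals 1
  have hp' : (⟦γ.map (continuous_subtype_val)⟧ :
      Path.Homotopic.Quotient (f ↑b₀) (f ↑b₀)) = ⟦Path.refl (f ↑b₀)⟧ := by
    have h1 := π₁ind_hom_eq (⟨Subtype.val, continuous_subtype_val⟩ : C(A, X))
      (⟨f ↑b₀, ha₀⟩ : A) p γ hγ.symm
    rw [hp] at h1
    exact h1.symm
  -- get a homotopy rel endpoints from γ (in X) to the constant loop
  have hhtpy : (γ.map (continuous_subtype_val)).Homotopic (Path.refl (f ↑b₀)) :=
    Quotient.exact hp'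
  obtain ⟨K⟩ := hhtpy
  -- lift the square
  haveI hne : ∀ x : X, Nonempty (f ⁻¹' {x}) := fun x => by
    obtain ⟨Γ, hΓ, -⟩ := hf.exists_path_lifts
      (PathConnectedSpace.somePath (f ↑b₀) x).toContinuousMap (↑b₀) (by simp)
    exact ⟨⟨Γ 1, by simpa using congrFun hΓ 1⟩⟩
  obtain ⟨G, hG, hG0⟩ := sq_lift hf K.toContinuousMap (↑b₀) (by simpa using (K.apply_zero 0).symm)
  have hGK : ∀ p, f (G p) = K p := hG
  -- edge constancy
  have h_left : ∀ t, G (t, 0) = ↑b₀ := by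
    intro t
    have hconst := hf.const_of_comp (g := fun t : I => G (t, 0))
      (by fun_prop) (fun a a' => by
        rw [hGK (a, 0), hGK (a', 0), K.eq_fst a (by norm_num), K.eq_fst a' (by norm_num)])
    exact (hconst t 0).trans hG0
  have h_top : ∀ s, G (1, s) = ↑b₀ := by
    intro s
    have hconst := hf.const_of_comp (g := fun s : I => G (1, s))
      (by fun_prop) (fun a a' => by rw [hGK (1, a), hGK (1, a'), K.apply_one, K.apply_one]; rfl)
    exact (hconst s 0).trans (h_left 1)
  have h_right : ∀ t, G (t, 1) = ↑b₀ := by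
    intro t
    have hconst := hf.const_of_comp (g := fun t : I => G (t, 1))
      (by fun_prop) (fun a a' => by
        rw [hGK (a, 1), hGK (a', 1), K.eq_fst a (by norm_num), K.eq_fst a' (by norm_num)])
    exact (hconst t 1).trans (h_top 1)
  -- the lifted loop lives in f ⁻¹' A
  have hmem : ∀ s : I, G (0, s) ∈ f ⁻¹' A := by
    intro s
    have hfg : f (G (0, s)) = ↑(γ s) := by rw [hGK (0, s)]; simpa using K.apply_zero s
    simp only [Set.mem_preimage, hfg]
    exact (γ s).2
  set δA : Path b₀ b₀ :=
    { toFun := fun s => (⟨G (0, s), hmem s⟩ : (f ⁻¹' A : Set Xt))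
      continuous_toFun := by fun_prop
      source' := Subtype.ext hG0
      target' := Subtype.ext (h_right 0) } with hδA
  -- the image loop in Xt is nullhomotopic via G
  have hδnull : Path.Homotopic (δA.map continuous_subtype_val) (Path.refl (↑b₀ : Xt)) := by
    refine ⟨{ toFun := fun p => G p
              continuous_toFun := G.continuous
              map_zero_left := fun s => rfl
              map_one_left := fun s => h_top s
              prop' := ?_ }⟩
    intro t s hs
    rcases hs with h0 | h1
    · subst h0
      show G (t, 0) = ↑(δA 0)
      rw [h_left t]
      exact (congrArg Subtype.val δA.source').symm
    · rw [Set.mem_singleton_iff] at h1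
      subst h1
      show G (t, 1) = ↑(δA 1)
      rw [h_right t]
      exact (congrArg Subtype.val δA.target').symm
  -- the corresponding element of π₁(Ã)
  set q : FundamentalGroup (f ⁻¹' A : Set Xt) b₀ :=
    FundamentalGroup.fromPath (⟦δA⟧ : Path.Homotopic.Quotient b₀ b₀) with hqdef
  have hq1 : q = 1 := by
    apply hiso.injective
    rw [map_one]
    show FundamentalGroup.toPath _ = FundamentalGroup.toPath 1
    have h1 := π₁ind_hom_eq
      (⟨Subtype.val, continuous_subtype_val⟩ : C((f ⁻¹' A : Set Xt), Xt)) b₀ q δA rfl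
    rw [h1]
    exact Quotient.sound hδnull
  -- so δA is nullhomotopic in Ã
  have hδAnull : Path.Homotopic δA (Path.refl b₀) := by
    have h2 : (⟦δA⟧ : Path.Homotopic.Quotient b₀ b₀) = ⟦Path.refl b₀⟧ := hq1
    exact Quotient.exact h2
  -- push the homotopy down to A
  set gq : C((f ⁻¹' A : Set Xt), A) :=
    ⟨fun x => ⟨f ↑x, x.2⟩, (hf.continuous.comp continuous_subtype_val).subtype_mk _⟩ with hgq
  have key : Path.Homotopic (δA.map gq.continuous) ((Path.refl b₀).map gq.continuous) :=
    Path.Homotopic.map hδAnull gq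
  have key2 : Path.Homotopic
      (show Path (⟨f ↑b₀, ha₀⟩ : A) (⟨f ↑b₀, ha₀⟩ : A) from δA.map gq.continuous)
      (show Path (⟨f ↑b₀, ha₀⟩ : A) (⟨f ↑b₀, ha₀⟩ : A) from (Path.refl b₀).map gq.continuous) :=
    key
  have hpaths : (show Path (⟨f ↑b₀, ha₀⟩ : A) (⟨f ↑b₀, ha₀⟩ : A) from δA.map gq.continuous)
      = γ := by
    ext s
    show f (G (0, s)) = ↑(γ s)
    rw [hGK (0, s)]; simpa using K.apply_zero s
  have hrefl : (show Path (⟨f ↑b₀, ha₀⟩ : A) (⟨f ↑b₀, ha₀⟩ : A)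
      from (Path.refl b₀).map gq.continuous) = Path.refl (⟨f ↑b₀, ha₀⟩ : A) := by
    ext s
    rfl
  rw [hpaths, hrefl] at key2
  show FundamentalGroup.toPath p = FundamentalGroup.toPath 1
  rw [← hγ]
  exact Quotient.sound key2
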